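/- Let x_1,…,x_n : [0,∞) → ℝ^m be continuous functions, let x*(t) = (1/n)∑_{i=1}^n x_i(t), and suppose lim_{t→∞} (x_i(t) − x*(t)) = 0 for every i. Let q_1,…,q_n : [0,∞) → ℝ be differentiable functions satisfying q̇_i(t) = arctan(exp(‖x_i(t)‖)) with q_i(0) > 0 for every i. Then lim_{t→∞} q_i(t)/q_j(t) = 1 for all i, j ∈ {1,…,n}. -/

import Mathlib

open Filter Topology

lemma arctan_exp_lip (a b : ℝ) :
    |Real.arctan (Real.exp a) - Real.arctan (Real.exp b)| ≤ (1/2) * |a - b| := by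
  have h := Convex.norm_image_sub_le_of_norm_hasDerivWithin_le
    (f := fun s : ℝ => Real.arctan (Real.exp s))
    (f' := fun s : ℝ => 1 / (1 + Real.exp s ^ 2) * Real.exp s)
    (s := Set.univ) (C := 1/2) ?_ ?_ convex_univ (Set.mem_univ b) (Set.mem_univ a)
  · simpa [Real.norm_eq_abs] using h
  · intro s _
    exact ((Real.hasDerivAt_arctan (Real.exp s)).comp s (Real.hasDerivAt_exp s)).hasDerivWithinAt
  · intro s _
    have he : 0 < Real.exp s := Real.exp_pos s
    have hden : 0 < 1 + Real.exp s ^ 2 := by positivity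
    show ‖1 / (1 + Real.exp s ^ 2) * Real.exp s‖ ≤ 1/2
    have hnn : (0:ℝ) ≤ 1 / (1 + Real.exp s ^ 2) * Real.exp s := by positivity
    rw [Real.norm_eq_abs, abs_of_nonneg hnn, div_mul_eq_mul_div, one_mul,
      div_le_iff₀ hden]
    nlinarith [sq_nonneg (Real.exp s - 1)]

/-- Consensus of the stepsizes: if the agents' states reach a consensus and
`q̇ᵢ(t) = arctan(exp‖xᵢ(t)‖)` with `qᵢ(0) > 0`, then `qᵢ(t)/qⱼ(t) → 1`. -/
theorem stmt_8 {m n : ℕ}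
    (x : Fin n → ℝ → EuclideanSpace ℝ (Fin m))
    (hx_cont : ∀ i, ContinuousOn (x i) (Set.Ici (0 : ℝ)))
    (xstar : ℝ → EuclideanSpace ℝ (Fin m))
    (hxstar : ∀ t : ℝ, xstar t = (n : ℝ)⁻¹ • ∑ i, x i t)
    (hcons : ∀ i, Tendsto (fun t => x i t - xstar t) atTop (𝓝 0))
    (q : Fin n → ℝ → ℝ)
    (hq0 : ∀ i, 0 < q i 0)
    (hq : ∀ i, ∀ t : ℝ, 0 ≤ t →
      HasDerivWithinAt (q i) (Real.arctan (Real.exp ‖x i t‖)) (Set.Ici 0) t) :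
    ∀ i j, Tendsto (fun t => q i t / q j t) atTop (𝓝 1) := by
  intro i j
  set g : Fin n → ℝ → ℝ := fun k t => Real.arctan (Real.exp ‖x k t‖) with hgdef
  have hg_lb : ∀ k t, Real.pi / 4 ≤ g k t := by
    intro k t
    have h1 : (1:ℝ) ≤ Real.exp ‖x k t‖ := Real.one_le_exp (norm_nonneg _)
    calc Real.pi / 4 = Real.arctan 1 := Real.arctan_one.symm
      _ ≤ g k t := Real.arctan_strictMono.monotone h1
  have hg_ub : ∀ k t, g k t ≤ Real.pi / 2 := fun k t => (Real.arctan_lt_pi_div_two _).le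
  have hpi : 0 < Real.pi := Real.pi_pos
  -- growth lower bound
  have hgrow : ∀ (k : Fin n) (a : ℝ), 0 ≤ a → ∀ t, a ≤ t →
      Real.pi / 4 * (t - a) ≤ q k t - q k a := by
    intro k a ha t hat
    have hsub : Set.Ici a ⊆ Set.Ici (0:ℝ) := Set.Ici_subset_Ici.2 ha
    have hmvt := Convex.norm_image_sub_le_of_norm_hasDerivWithin_le
      (f := fun t => Real.pi / 2 * t - q k t)
      (f' := fun t => Real.pi / 2 - g k t) (s := Set.Ici a) (C := Real.pi / 4)
      ?_ ?_ (convex_Ici a) (Set.mem_Ici.2 le_rfl) (Set.mem_Ici.2 hat)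
    · have hmvt' : |Real.pi / 2 * t - q k t - (Real.pi / 2 * a - q k a)| ≤
          Real.pi / 4 * (t - a) := by
        simpa [Real.norm_eq_abs, abs_of_nonneg (sub_nonneg.2 hat)] using hmvt
      have := (abs_le.1 hmvt').2
      linarith
    · intro s hs
      have hds := ((hasDerivAt_id s).const_mul (Real.pi / 2)).hasDerivWithinAt.sub
        ((hq k s (hsub hs)).mono hsub)
      simpa [mul_comm, Pi.sub_def] using hds
    · intro s _
      rw [Real.norm_eq_abs, abs_le]
      constructor
      · linarith [hg_ub k s]
      · linarith [hg_lb k s]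
  have hqpos : ∀ (k : Fin n) (t : ℝ), 0 ≤ t → 0 < q k t := by
    intro k t ht
    have h1 := hgrow k 0 le_rfl t ht
    have h2 := hq0 k
    nlinarith
  -- the derivatives get close
  have hdiff0 : Tendsto (fun t => g i t - g j t) atTop (𝓝 0) := by
    have hx : Tendsto (fun t => x i t - x j t) atTop (𝓝 0) := by
      have h := (hcons i).sub (hcons j)
      simpa using h
    have hx' : Tendsto (fun t => (1/2 : ℝ) * ‖x i t - x j t‖) atTop (𝓝 0) := by
      have := (hx.norm).const_mul (1/2 : ℝ)
      simpa using this
    refine squeeze_zero_norm (fun t => ?_) hx'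
    calc ‖g i t - g j t‖ ≤ (1/2) * |‖x i t‖ - ‖x j t‖| := arctan_exp_lip _ _
      _ ≤ (1/2) * ‖x i t - x j t‖ := by
          have := abs_norm_sub_norm_le (x i t) (x j t)
          linarith
  -- ratio of difference to q j tends to 0
  have hratio : Tendsto (fun t => (q i t - q j t) / q j t) atTop (𝓝 0) := by
    rw [Metric.tendsto_atTop]
    intro ε hε
    have hε' : 0 < ε * Real.pi / 8 := by positivity
    obtain ⟨T₀, hT₀⟩ := Metric.tendsto_atTop.1 hdiff0 (ε * Real.pi / 8) hε'
    set T : ℝ := max T₀ 0 with hTdef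
    have hT0 : (0:ℝ) ≤ T := le_max_right _ _
    set C : ℝ := |q i T - q j T| with hCdef
    refine ⟨max T (max 1 (8 * C / (ε * Real.pi) + 1)), fun t ht => ?_⟩
    have htT : T ≤ t := le_trans (le_max_left _ _) ht
    have ht1 : (1:ℝ) ≤ t := le_trans (le_trans (le_max_left _ _) (le_max_right _ _)) ht
    have htC : 8 * C / (ε * Real.pi) + 1 ≤ t :=
      le_trans (le_trans (le_max_right _ _) (le_max_right _ _)) ht
    have ht0 : (0:ℝ) ≤ t := by linarith
    -- MVT bound for the difference
    have hsub : Set.Ici T ⊆ Set.Ici (0:ℝ) := Set.Ici_subset_Ici.2 hT0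
    have hmvt := Convex.norm_image_sub_le_of_norm_hasDerivWithin_le
      (f := fun s => q i s - q j s)
      (f' := fun s => g i s - g j s) (s := Set.Ici T) (C := ε * Real.pi / 8)
      ?_ ?_ (convex_Ici T) (Set.mem_Ici.2 le_rfl) (Set.mem_Ici.2 htT)
    · have hmvt' : |q i t - q j t - (q i T - q j T)| ≤ ε * Real.pi / 8 * (t - T) := by
        simpa [Real.norm_eq_abs, abs_of_nonneg (sub_nonneg.2 htT)] using hmvt
      have hnum : |q i t - q j t| ≤ C + ε * Real.pi / 8 * t := by
        have h1 := abs_sub_abs_le_abs_sub (q i t - q j t) (q i T - q j T)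
        have h2 : ε * Real.pi / 8 * (t - T) ≤ ε * Real.pi / 8 * t := by nlinarith
        rw [hCdef]
        linarith
      have hqj : Real.pi / 4 * t ≤ q j t := by
        have h1 := hgrow j 0 le_rfl t ht0
        have h2 := hq0 j
        nlinarith
      have hqjpos : 0 < q j t := hqpos j t ht0
      rw [Real.dist_eq, sub_zero, abs_div, abs_of_pos hqjpos, div_lt_iff₀ hqjpos]
      have hC8 : 8 * C < t * (ε * Real.pi) := by
        have hεπ : 0 < ε * Real.pi := by positivity
        have : 8 * C / (ε * Real.pi) < t := by linarith
        exact (div_lt_iff₀ hεπ).1 this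
      have h2 : ε * (Real.pi / 4 * t) ≤ ε * q j t :=
        mul_le_mul_of_nonneg_left hqj hε.le
      nlinarith
    · intro s hs
      exact ((hq i s (hsub hs)).mono hsub).sub ((hq j s (hsub hs)).mono hsub)
    · intro s hs
      have hsT₀ : T₀ ≤ s := le_trans (le_max_left _ _) hs
      have := hT₀ s hsT₀
      rw [Real.dist_eq, sub_zero] at this
      rw [Real.norm_eq_abs]
      exact this.le
  -- conclude
  have hfin : Tendsto (fun t => 1 + (q i t - q j t) / q j t) atTop (𝓝 1) := by
    have := (tendsto_const_nhds (α := ℝ) (f := (atTop : Filter ℝ)) (x := (1:ℝ))).add hratio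
    simpa using this
  refine hfin.congr' ?_
  filter_upwards [eventually_ge_atTop (0:ℝ)] with t ht
  have hqj : 0 < q j t := hqpos j t ht
  field_simp
  ring
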